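/- Let C be a hereditary abelian K-category with finite dimensional Hom and Ext spaces. Let X₁,…,X_m be objects with Ext^1(X_i,X_j) ≠ 0 for some i ≠ j, and let 0 → X_j → E → X_i → 0 be a nonsplit extension. Then dim End(E ⊕ ⨁_{k≠i,j} X_k) < dim End(⨁_{k=1}^m X_k). -/

import Mathlib

/-!
STATEMENT 6: In a hereditary abelian `K`-category with finite dimensional Hom and Ext
spaces, let `X₁, …, X_m` be objects with `Ext¹(X_i, X_j) ≠ 0` for some `i ≠ j`, and let
`0 → X_j → E → X_i → 0` be a nonsplit extension.  Then
`dim End (E ⊕ ⨁_{k ≠ i,j} X_k) < dim End (⨁_{k=1}^m X_k)`.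
-/

open CategoryTheory CategoryTheory.Limits Opposite

attribute [local instance] CategoryTheory.Abelian.hasFiniteBiproducts

noncomputable section

universe v u

variable (K : Type*) [Field K]
variable {C : Type u} [Category.{v} C] [Abelian C] [Linear K C] [EnoughProjectives C]

/-- The first Ext space, as a `K`-module. -/
def ext1 (X Y : C) : ModuleCat K := ((Ext K C 1).obj (op X)).obj Y

open Module

set_option linter.unusedSectionVars false

/-- Hom out of a binary biproduct, as a linear equiv. -/
def biprodHomEquivL (A B Y : C) : (A ⊞ B ⟶ Y) ≃ₗ[K] (A ⟶ Y) × (B ⟶ Y) where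
  toFun f := (biprod.inl ≫ f, biprod.inr ≫ f)
  invFun p := biprod.desc p.1 p.2
  map_add' f g := by simp [Preadditive.comp_add]
  map_smul' c f := by simp [Linear.comp_smul]
  left_inv f := by apply biprod.hom_ext' <;> simp
  right_inv p := by simp

/-- Hom into a binary biproduct, as a linear equiv. -/
def biprodHomEquivR (A B Y : C) : (Y ⟶ A ⊞ B) ≃ₗ[K] (Y ⟶ A) × (Y ⟶ B) where
  toFun f := (f ≫ biprod.fst, f ≫ biprod.snd)
  invFun p := biprod.lift p.1 p.2
  map_add' f g := by simp [Preadditive.add_comp]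
  map_smul' c f := by simp [Linear.smul_comp]
  left_inv f := by apply biprod.hom_ext <;> simp
  right_inv p := by simp

/-- Hom out of a finite biproduct, as a linear equiv. -/
def biproductHomEquivL {ι : Type*} [Fintype ι] (f : ι → C) (Y : C) :
    ((⨁ f) ⟶ Y) ≃ₗ[K] (∀ k, (f k ⟶ Y)) where
  toFun g k := biproduct.ι f k ≫ g
  invFun h := biproduct.desc h
  map_add' f g := by funext; simp [Preadditive.comp_add]
  map_smul' c f := by funext; simp [Linear.comp_smul]
  left_inv g := by apply biproduct.hom_ext' ; intro k; simp
  right_inv h := by funext k; simp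

/-- Hom into a finite biproduct, as a linear equiv. -/
def biproductHomEquivR {ι : Type*} [Fintype ι] (f : ι → C) (Y : C) :
    (Y ⟶ (⨁ f)) ≃ₗ[K] (∀ k, (Y ⟶ f k)) where
  toFun g k := g ≫ biproduct.π f k
  invFun h := biproduct.lift h
  map_add' f g := by funext; simp [Preadditive.add_comp]
  map_smul' c f := by funext; simp [Linear.smul_comp]
  left_inv g := by apply biproduct.hom_ext ; intro k; simp
  right_inv h := by funext k; simp

section SES

variable {A E B : C} (ι : A ⟶ E) (π : E ⟶ B) (w : ι ≫ π = 0)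

/-- Left exactness of `Hom(Y, -)`, dimension count. -/
lemma dim_hom_to_le (hfin : ∀ X Y : C, FiniteDimensional K (X ⟶ Y))
    (hmono : Mono ι) (hexact : (ShortComplex.mk ι π w).Exact) (Y : C) :
    finrank K (Y ⟶ E) ≤ finrank K (Y ⟶ A) + finrank K (Y ⟶ B) := by
  haveI := hfin
  haveI : Mono (ShortComplex.mk ι π w).f := hmono
  set Ψ : (Y ⟶ E) →ₗ[K] (Y ⟶ B) := Linear.rightComp K Y π with hΨ
  have hker : LinearMap.ker Ψ ≤ LinearMap.range (Linear.rightComp K Y ι) := by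
    intro f hf
    simp only [LinearMap.mem_ker, hΨ, Linear.rightComp_apply] at hf
    obtain ⟨l, hl⟩ := hexact.lift' f hf
    exact ⟨l, hl⟩
  have hinj : Function.Injective (Linear.rightComp K Y ι) := by
    intro f g h
    simp only [Linear.rightComp_apply] at h
    rwa [cancel_mono] at h
  calc finrank K (Y ⟶ E)
      = finrank K (LinearMap.range Ψ) + finrank K (LinearMap.ker Ψ) :=
        (LinearMap.finrank_range_add_finrank_ker Ψ).symm
    _ ≤ finrank K (Y ⟶ B) + finrank K (Y ⟶ A) := by
        gcongr
        · exact (LinearMap.range Ψ).finrank_le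
        · calc finrank K (LinearMap.ker Ψ)
              ≤ finrank K (LinearMap.range (Linear.rightComp K Y ι)) :=
                Submodule.finrank_mono hker
            _ = finrank K (Y ⟶ A) := LinearMap.finrank_range_of_inj hinj
    _ = finrank K (Y ⟶ A) + finrank K (Y ⟶ B) := Nat.add_comm _ _

/-- Left exactness of `Hom(-, Y)`, dimension count, precise version. -/
lemma dim_hom_from_eq (hfin : ∀ X Y : C, FiniteDimensional K (X ⟶ Y))
    (hepi : Epi π) (hexact : (ShortComplex.mk ι π w).Exact) (Y : C) :
    finrank K (E ⟶ Y) =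
      finrank K (B ⟶ Y) + finrank K (LinearMap.range (Linear.leftComp K Y ι)) := by
  haveI := hfin
  haveI : Epi (ShortComplex.mk ι π w).g := hepi
  set Ψ : (E ⟶ Y) →ₗ[K] (A ⟶ Y) := Linear.leftComp K Y ι with hΨ
  have hker : LinearMap.ker Ψ = LinearMap.range (Linear.leftComp K Y π) := by
    ext f
    simp only [LinearMap.mem_ker, hΨ, Linear.leftComp_apply, LinearMap.mem_range]
    constructor
    · intro hf
      obtain ⟨l, hl⟩ := hexact.desc' f hf
      exact ⟨l, hl⟩
    · rintro ⟨l, rfl⟩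
      rw [← Category.assoc, w, zero_comp]
  have hinj : Function.Injective (Linear.leftComp K Y π) := by
    intro f g h
    simp only [Linear.leftComp_apply] at h
    rwa [cancel_epi] at h
  calc finrank K (E ⟶ Y)
      = finrank K (LinearMap.range Ψ) + finrank K (LinearMap.ker Ψ) :=
        (LinearMap.finrank_range_add_finrank_ker Ψ).symm
    _ = finrank K (B ⟶ Y) + finrank K (LinearMap.range (Linear.leftComp K Y ι)) := by
        rw [hker, LinearMap.finrank_range_of_inj hinj, Nat.add_comm]

lemma dim_hom_from_le (hfin : ∀ X Y : C, FiniteDimensional K (X ⟶ Y))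
    (hepi : Epi π) (hexact : (ShortComplex.mk ι π w).Exact) (Y : C) :
    finrank K (E ⟶ Y) ≤ finrank K (B ⟶ Y) + finrank K (A ⟶ Y) := by
  haveI := hfin
  rw [dim_hom_from_eq K ι π w hfin hepi hexact Y]
  gcongr
  exact (LinearMap.range (Linear.leftComp K Y ι)).finrank_le

lemma dim_hom_from_strict (hfin : ∀ X Y : C, FiniteDimensional K (X ⟶ Y))
    (hepi : Epi π) (hexact : (ShortComplex.mk ι π w).Exact)
    (hnonsplit : ¬ ∃ r : E ⟶ A, ι ≫ r = 𝟙 A) :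
    finrank K (E ⟶ A) + 1 ≤ finrank K (B ⟶ A) + finrank K (A ⟶ A) := by
  haveI := hfin
  rw [dim_hom_from_eq K ι π w hfin hepi hexact A]
  have hne : LinearMap.range (Linear.leftComp K A ι) ≠ ⊤ := by
    intro htop
    have : 𝟙 A ∈ LinearMap.range (Linear.leftComp K A ι) := htop ▸ Submodule.mem_top
    obtain ⟨r, hr⟩ := this
    exact hnonsplit ⟨r, hr⟩
  have := Submodule.finrank_lt (K := K) (V := (A ⟶ A)) hne
  omega

end SES

/-- Splitting a sum over `Fin m` at two distinct indices. -/
lemma sum_split {m : ℕ} (i j : Fin m) (hij : i ≠ j) (g : Fin m → ℕ) :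
    ∑ k, g k = g i + g j + ∑ t : {k : Fin m // k ≠ i ∧ k ≠ j}, g ↑t := by
  classical
  have h1 : ∑ t : {k : Fin m // k ≠ i ∧ k ≠ j}, g ↑t
      = ∑ k ∈ Finset.univ.filter (fun k => k ≠ i ∧ k ≠ j), g k :=
    (Finset.sum_subtype _ (by simp) g).symm
  have h2 : Finset.univ.filter (fun k => k ≠ i ∧ k ≠ j) = Finset.univ \ {i, j} := by
    ext k
    simp [not_or]
  have h3 : ({i, j} : Finset (Fin m)) ⊆ Finset.univ := Finset.subset_univ _
  have h4 := Finset.sum_sdiff (f := g) h3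
  rw [h1, h2, Finset.sum_pair hij] at *
  omega

theorem end_dim_lt_of_nonsplit_extension
    (hHomFin : ∀ X Y : C, FiniteDimensional K (X ⟶ Y))
    (hExtFin : ∀ X Y : C, FiniteDimensional K (ext1 K X Y))
    (hHereditary : ∀ (X Y : C) (n : ℕ), 2 ≤ n →
      IsZero (((Ext K C n).obj (op X)).obj Y))
    (m : ℕ) (X : Fin m → C) (i j : Fin m) (hij : i ≠ j)
    (hExtne : ¬ IsZero (ext1 K (X i) (X j)))
    (E : C) (ι : X j ⟶ E) (π : E ⟶ X i) (w : ι ≫ π = 0)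
    (hmono : Mono ι) (hepi : Epi π) (hexact : (ShortComplex.mk ι π w).Exact)
    (hnonsplit : ¬ ∃ r : E ⟶ X j, ι ≫ r = 𝟙 (X j)) :
    Module.finrank K
        ((E ⊞ ⨁ fun k : {k : Fin m // k ≠ i ∧ k ≠ j} => X k) ⟶
          (E ⊞ ⨁ fun k : {k : Fin m // k ≠ i ∧ k ≠ j} => X k))
      < Module.finrank K ((⨁ X) ⟶ (⨁ X)) := by
  classical
  haveI := hHomFin
  set T := {k : Fin m // k ≠ i ∧ k ≠ j} with hT
  set XT : T → C := fun k => X ↑k with hXT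
  set R : C := ⨁ XT with hR
  set N : C := E ⊞ R with hN
  set d : Fin m → Fin m → ℕ := fun k l => finrank K (X k ⟶ X l) with hd
  -- decompose the right hand side
  have hRHS : finrank K ((⨁ X) ⟶ (⨁ X)) = ∑ k, ∑ l, d k l := by
    rw [(biproductHomEquivL K X (⨁ X)).finrank_eq, finrank_pi_fintype]
    refine Finset.sum_congr rfl fun k _ => ?_
    rw [(biproductHomEquivR K X (X k)).finrank_eq, finrank_pi_fintype]
  -- decompose the left hand side
  have hLHS : finrank K (N ⟶ N) =
      finrank K (E ⟶ E) + (∑ t : T, finrank K (E ⟶ X ↑t))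
        + ((∑ t : T, finrank K (X ↑t ⟶ E)) + ∑ t : T, ∑ t' : T, d ↑t ↑t') := by
    have hRfrom : ∀ Y : C, finrank K (R ⟶ Y) = ∑ t : T, finrank K (X ↑t ⟶ Y) := by
      intro Y
      rw [(biproductHomEquivL K XT Y).finrank_eq, finrank_pi_fintype]
    have hRto : ∀ Y : C, finrank K (Y ⟶ R) = ∑ t : T, finrank K (Y ⟶ X ↑t) := by
      intro Y
      rw [(biproductHomEquivR K XT Y).finrank_eq, finrank_pi_fintype]
    have hRR : finrank K (R ⟶ R) = ∑ t : T, ∑ t' : T, d ↑t ↑t' := by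
      rw [hRfrom R]
      exact Finset.sum_congr rfl fun t _ => hRto (X ↑t)
    rw [(biprodHomEquivL K E R N).finrank_eq, finrank_prod,
      (biprodHomEquivR K E R E).finrank_eq, finrank_prod,
      (biprodHomEquivR K E R R).finrank_eq, finrank_prod,
      hRR, hRto E, hRfrom E]
  -- the key inequalities
  have hEE : finrank K (E ⟶ E) + 1 ≤ d i i + d i j + d j i + d j j := by
    have h1 : finrank K (E ⟶ E) ≤ finrank K (E ⟶ X j) + finrank K (E ⟶ X i) :=
      dim_hom_to_le K ι π w hHomFin hmono hexact E
    have h2 : finrank K (E ⟶ X j) + 1 ≤ d i j + d j j :=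
      dim_hom_from_strict K ι π w hHomFin hepi hexact hnonsplit
    have h3 : finrank K (E ⟶ X i) ≤ d i i + d j i :=
      dim_hom_from_le K ι π w hHomFin hepi hexact (X i)
    omega
  have hEt : ∑ t : T, finrank K (E ⟶ X ↑t) ≤ (∑ t : T, d i ↑t) + ∑ t : T, d j ↑t :=
    le_trans (Finset.sum_le_sum fun t _ =>
      dim_hom_from_le K ι π w hHomFin hepi hexact (X ↑t)) (le_of_eq Finset.sum_add_distrib)
  have htE : ∑ t : T, finrank K (X ↑t ⟶ E) ≤ (∑ t : T, d ↑t j) + ∑ t : T, d ↑t i :=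
    le_trans (Finset.sum_le_sum fun t _ =>
      dim_hom_to_le K ι π w hHomFin hmono hexact (X ↑t)) (le_of_eq Finset.sum_add_distrib)
  -- split the right hand side sum
  have hsplit : ∑ k, ∑ l, d k l =
      (d i i + d i j + ∑ t : T, d i ↑t) + (d j i + d j j + ∑ t : T, d j ↑t)
        + (((∑ t : T, d ↑t i) + ∑ t : T, d ↑t j) + ∑ t : T, ∑ t' : T, d ↑t ↑t') := by
    have hin : ∀ k, ∑ l, d k l = d k i + d k j + ∑ t : T, d k ↑t :=
      fun k => sum_split i j hij (d k)
    calc ∑ k, ∑ l, d k l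
        = ∑ k, (d k i + d k j + ∑ t : T, d k ↑t) := Finset.sum_congr rfl fun k _ => hin k
      _ = (d i i + d i j + ∑ t : T, d i ↑t) + (d j i + d j j + ∑ t : T, d j ↑t)
            + ∑ t : T, (d ↑t i + d ↑t j + ∑ t' : T, d ↑t ↑t') := sum_split i j hij _
      _ = _ := by rw [Finset.sum_add_distrib, Finset.sum_add_distrib]
  rw [hLHS, hRHS, hsplit]
  omega

end
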